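/- For every x ∈ ∂A_g there exists a vector v ∈ ℝ^{(d+1)n} with |v|² < 4 n³ r_+² such that v·n_{i+} = r_- /2 for every i with x̆_i = r_+, v·n_{i−} = r_- /2 for every i with x̆_i = r_-, and v·n_{ij}(x) ≥ r_- /2 for every pair i ≠ j with |x_i − x_j| = x̆_i + x̆_j. (Such a v is obtained by taking v_i = x_i − x'_i, where x'_i is the center of gravity of the cluster of globules connected to globule i by a chain of collisions, and v̆_i = (r_- /(r_+ − r_-))((r_+ + r_-)/2 − x̆_i).) -/

import Mathlib

open scoped RealInnerProductSpace

noncomputable section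

variable {H : Type*} [NormedAddCommGroup H] [InnerProductSpace ℝ H]

/-- The set `N^D_{x,α}` of inward unit normal vectors to `D` at `x` with constant `α`. -/
def normalSet (D : Set H) (x : H) (α : ℝ) : Set H :=
  {v | ‖v‖ = 1 ∧ Metric.ball (x - α • v) α ∩ D = ∅}

/-- The set `N^D_x = ⋃_{α>0} N^D_{x,α}` of inward unit normal vectors to `D` at `x`. -/
def normalCone (D : Set H) (x : H) : Set H :=
  ⋃ α ∈ Set.Ioi (0 : ℝ), normalSet D x α

/-- `D` satisfies the Uniform Exterior Sphere property with constant `α`. -/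
def UES (D : Set H) (α : ℝ) : Prop :=
  ∀ x ∈ frontier D, normalCone D x = normalSet D x α ∧ (normalSet D x α).Nonempty

/-- `D` satisfies the Uniform Normal Cone property with constants `β`, `δ`. -/
def UNC (D : Set H) (β δ : ℝ) : Prop :=
  ∀ x ∈ frontier D, ∃ l : H, ‖l‖ = 1 ∧
    ∀ y ∈ frontier D, ‖y - x‖ ≤ δ → ∀ v ∈ normalCone D y, ⟪v, l⟫ ≥ Real.sqrt (1 - β ^ 2)

/-- The configuration space `ℝ^{(d+1)n}` of `n` globules in `ℝ^d`: each globule is a pair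
(center, radius), and the whole space carries the Euclidean (`L²`) norm. -/
abbrev GConf (d n : ℕ) : Type :=
  PiLp 2 (fun _ : Fin n => WithLp 2 (EuclideanSpace ℝ (Fin d) × ℝ))

variable {d n : ℕ}

/-- Center of the `i`-th globule. -/
def gC (x : GConf d n) (i : Fin n) : EuclideanSpace ℝ (Fin d) := (x i).fst

/-- Radius of the `i`-th globule. -/
def gR (x : GConf d n) (i : Fin n) : ℝ := (x i).snd

/-- Build a configuration from a family of (center, radius) pairs. -/
def mkG (f : Fin n → EuclideanSpace ℝ (Fin d) × ℝ) : GConf d n :=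
  (WithLp.equiv 2 _).symm fun i => (WithLp.equiv 2 _).symm (f i)

/-- The set `A_g` of allowed globule configurations: all radii lie in `[r₋, r₊]` and the
globules are pairwise non-intersecting. -/
def Ag (d n : ℕ) (rm rp : ℝ) : Set (GConf d n) :=
  {x | (∀ i, rm ≤ gR x i ∧ gR x i ≤ rp) ∧
    ∀ i j, i ≠ j → ‖gC x i - gC x j‖ ≥ gR x i + gR x j}

/-- The unit normal vector `n_{ij}(x)` to the collision constraint `|x_i−x_j| ≥ x̆_i+x̆_j`,
at a configuration `x` with `|x_i−x_j| = x̆_i+x̆_j > 0`. -/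
def nij (x : GConf d n) (i j : Fin n) : GConf d n :=
  mkG fun k =>
    if k = i then ((2 * (gR x i + gR x j))⁻¹ • (gC x i - gC x j), -(1 / 2 : ℝ))
    else if k = j then ((2 * (gR x i + gR x j))⁻¹ • (gC x j - gC x i), -(1 / 2 : ℝ))
    else 0

/-- The unit normal vector `n_{i+}` to the constraint `x̆_i ≤ r₊`: its only nonzero component
is the radius component of globule `i`, equal to `−1`. -/
def nplus (d n : ℕ) (i : Fin n) : GConf d n :=
  mkG fun k => if k = i then (0, (-1 : ℝ)) else 0

/-- The unit normal vector `n_{i−}` to the constraint `x̆_i ≥ r₋`: its only nonzero component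
is the radius component of globule `i`, equal to `1`. -/
def nminus (d n : ℕ) (i : Fin n) : GConf d n :=
  mkG fun k => if k = i then (0, (1 : ℝ)) else 0

end

noncomputable section Aux

variable {d n : ℕ}

lemma gC_mkG (f : Fin n → EuclideanSpace ℝ (Fin d) × ℝ) (k : Fin n) :
    gC (mkG f) k = (f k).1 := rfl

lemma gR_mkG (f : Fin n → EuclideanSpace ℝ (Fin d) × ℝ) (k : Fin n) :
    gR (mkG f) k = (f k).2 := rfl

lemma inner_gconf (w u : GConf d n) :
    ⟪w, u⟫ = ∑ k, (⟪gC w k, gC u k⟫ + gR w k * gR u k) := by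
  rw [PiLp.inner_apply]
  refine Finset.sum_congr rfl fun k _ => ?_
  rw [WithLp.prod_inner_apply]
  simp [RCLike.inner_apply, gC, gR]
  ring

lemma norm_sq_gconf (w : GConf d n) :
    ‖w‖ ^ 2 = ∑ k, (‖gC w k‖ ^ 2 + gR w k ^ 2) := by
  rw [← real_inner_self_eq_norm_sq, inner_gconf]
  refine Finset.sum_congr rfl fun k _ => ?_
  rw [real_inner_self_eq_norm_sq]; ring

lemma cont_gR (i : Fin n) : Continuous fun y : GConf d n => gR y i := by
  have h1 := (PiLp.continuousLinearEquiv 2 ℝ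
    (fun _ : Fin n => WithLp 2 (EuclideanSpace ℝ (Fin d) × ℝ))).continuous
  have h2 := (WithLp.prodContinuousLinearEquiv 2 ℝ (EuclideanSpace ℝ (Fin d)) ℝ).continuous
  exact continuous_snd.comp (h2.comp ((continuous_apply i).comp h1))

lemma cont_gC (i : Fin n) : Continuous fun y : GConf d n => gC y i := by
  have h1 := (PiLp.continuousLinearEquiv 2 ℝ
    (fun _ : Fin n => WithLp 2 (EuclideanSpace ℝ (Fin d) × ℝ))).continuous
  have h2 := (WithLp.prodContinuousLinearEquiv 2 ℝ (EuclideanSpace ℝ (Fin d)) ℝ).continuous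
  exact continuous_fst.comp (h2.comp ((continuous_apply i).comp h1))

lemma isClosed_Ag (rm rp : ℝ) : IsClosed (Ag d n rm rp) := by
  have h1 : Ag d n rm rp =
      (⋂ i, ({x : GConf d n | rm ≤ gR x i} ∩ {x | gR x i ≤ rp})) ∩
      (⋂ i, ⋂ j, ⋂ _ : i ≠ j, {x : GConf d n | gR x i + gR x j ≤ ‖gC x i - gC x j‖}) := by
    ext y
    simp only [Ag, Set.mem_setOf_eq, Set.mem_inter_iff, Set.mem_iInter]
  rw [h1]
  refine IsClosed.inter (isClosed_iInter fun i => ?_)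
    (isClosed_iInter fun i => isClosed_iInter fun j => isClosed_iInter fun _ => ?_)
  · exact (isClosed_le continuous_const (cont_gR i)).inter
      (isClosed_le (cont_gR i) continuous_const)
  · exact isClosed_le ((cont_gR i).add (cont_gR j)) ((cont_gC i).sub (cont_gC j)).norm

lemma inner_nplus (v : GConf d n) (i : Fin n) : ⟪v, nplus d n i⟫ = -gR v i := by
  rw [inner_gconf, Finset.sum_eq_single i]
  · simp [nplus, gC_mkG, gR_mkG]
  · intro k _ hk
    simp [nplus, gC_mkG, gR_mkG, hk]
  · simp

lemma inner_nminus (v : GConf d n) (i : Fin n) : ⟪v, nminus d n i⟫ = gR v i := by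
  rw [inner_gconf, Finset.sum_eq_single i]
  · simp [nminus, gC_mkG, gR_mkG]
  · intro k _ hk
    simp [nminus, gC_mkG, gR_mkG, hk]
  · simp

lemma inner_nij_eq (v x : GConf d n) (i j : Fin n) (hij : i ≠ j) :
    ⟪v, nij x i j⟫ = (2 * (gR x i + gR x j))⁻¹ * ⟪gC v i - gC v j, gC x i - gC x j⟫
      - (gR v i + gR v j) / 2 := by
  rw [inner_gconf]
  have h0 : ∀ k ∈ (Finset.univ : Finset (Fin n)), k ∉ ({i, j} : Finset (Fin n)) →
      (⟪gC v k, gC (nij x i j) k⟫ + gR v k * gR (nij x i j) k) = 0 := by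
    intro k _ hk
    simp only [Finset.mem_insert, Finset.mem_singleton, not_or] at hk
    simp [nij, gC_mkG, gR_mkG, hk.1, hk.2]
  rw [← Finset.sum_subset (Finset.subset_univ {i, j}) h0, Finset.sum_pair hij]
  have hji : j ≠ i := hij.symm
  simp only [nij, gC_mkG, gR_mkG, hji, if_true, if_false, ite_true, ite_false, if_neg hji,
    eq_self_iff_true, ne_eq]
  rw [real_inner_smul_right, real_inner_smul_right, inner_sub_left,
    ← neg_sub (gC x i) (gC x j), inner_neg_right]
  ring

end Aux

/-- For every `x ∈ ∂A_g` there is a vector `v` with `|v|² < 4 n³ r₊²` such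
that `v·n_{i+} = r₋/2` for every `i` with `x̆_i = r₊`, `v·n_{i−} = r₋/2` for every `i` with
`x̆_i = r₋`, and `v·n_{ij}(x) ≥ r₋/2` for every colliding pair `i ≠ j`. -/
theorem stmt_14 (d n : ℕ) (hd : 2 ≤ d) (hn : 1 ≤ n) (rm rp : ℝ)
    (h0 : 0 < rm) (hr : rm < rp)
    (x : GConf d n) (hx : x ∈ frontier (Ag d n rm rp)) :
    ∃ v : GConf d n, ‖v‖ ^ 2 < 4 * n ^ 3 * rp ^ 2 ∧
      (∀ i, gR x i = rp → ⟪v, nplus d n i⟫ = rm / 2) ∧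
      (∀ i, gR x i = rm → ⟪v, nminus d n i⟫ = rm / 2) ∧
      (∀ i j, i ≠ j → ‖gC x i - gC x j‖ = gR x i + gR x j →
        ⟪v, nij x i j⟫ ≥ rm / 2) := by
  classical
  have hA : x ∈ Ag d n rm rp := (isClosed_Ag rm rp).frontier_subset hx
  have hrad : ∀ i, rm ≤ gR x i ∧ gR x i ≤ rp := hA.1
  have hpm : (0 : ℝ) < rp - rm := by linarith
  have hrp : (0 : ℝ) < rp := lt_trans h0 hr
  set c : ℝ := rm / (rp - rm) with hc_def
  have hc0 : 0 ≤ c := div_nonneg h0.le hpm.le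
  have hc : c * (rp - rm) = rm := by
    rw [hc_def]; exact div_mul_cancel₀ rm (ne_of_gt hpm)
  -- the collision graph
  let G : SimpleGraph (Fin n) :=
    { Adj := fun i j => i ≠ j ∧ ‖gC x i - gC x j‖ = gR x i + gR x j
      symm := by
        constructor
        intro i j h
        refine ⟨h.1.symm, ?_⟩
        rw [norm_sub_rev, h.2, add_comm]
      loopless := ⟨fun i h => h.1 rfl⟩ }
  let rep : Fin n → Fin n := fun i => (G.connectedComponentMk i).out
  have hrep : ∀ i, G.Reachable i (rep i) := by
    intro i
    have h1 : G.connectedComponentMk (rep i) = G.connectedComponentMk i :=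
      Quot.out_eq (G.connectedComponentMk i)
    exact (SimpleGraph.ConnectedComponent.eq.mp h1).symm
  have hrepeq : ∀ i j, G.Adj i j → rep i = rep j := by
    intro i j h
    have h1 : G.connectedComponentMk i = G.connectedComponentMk j :=
      SimpleGraph.ConnectedComponent.eq.mpr h.reachable
    simp only [rep, h1]
  -- distance bound along walks
  have hwalk : ∀ (a b : Fin n) (p : G.Walk a b),
      ‖gC x a - gC x b‖ ≤ 2 * rp * (p.length : ℝ) := by
    intro a b p
    induction p with
    | nil => simp
    | @cons u w b h q ih =>
      have h1 : ‖gC x u - gC x b‖ ≤ ‖gC x u - gC x w‖ + ‖gC x w - gC x b‖ := by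
        have := norm_sub_le (gC x u - gC x w) (gC x b - gC x w)
        calc ‖gC x u - gC x b‖ = ‖(gC x u - gC x w) - (gC x b - gC x w)‖ := by
              congr 1; abel
          _ ≤ ‖gC x u - gC x w‖ + ‖gC x b - gC x w‖ := norm_sub_le _ _
          _ = ‖gC x u - gC x w‖ + ‖gC x w - gC x b‖ := by
              congr 1; exact norm_sub_rev _ _
      have h2 : ‖gC x u - gC x w‖ ≤ 2 * rp := by
        rw [h.2]
        have := (hrad u).2; have := (hrad w).2
        linarith
      have h3 : ((q.cons h).length : ℝ) = (q.length : ℝ) + 1 := by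
        rw [SimpleGraph.Walk.length_cons]; push_cast; ring
      rw [h3]
      nlinarith [ih]
  have hdist : ∀ i, ‖gC x i - gC x (rep i)‖ ≤ 2 * rp * ((n : ℝ) - 1) := by
    intro i
    obtain ⟨p⟩ := hrep i
    have hq : p.bypass.IsPath := SimpleGraph.Walk.bypass_isPath p
    have hlen : p.bypass.length < n := by
      have := hq.length_lt
      simpa using this
    have hlen' : (p.bypass.length : ℝ) ≤ (n : ℝ) - 1 := by
      have : p.bypass.length + 1 ≤ n := hlen
      have := (Nat.cast_le (α := ℝ)).mpr this
      push_cast at this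
      linarith
    calc ‖gC x i - gC x (rep i)‖ ≤ 2 * rp * (p.bypass.length : ℝ) := hwalk _ _ p.bypass
      _ ≤ 2 * rp * ((n : ℝ) - 1) := by nlinarith
  -- the vector v
  refine ⟨mkG fun i => (gC x i - gC x (rep i), c * ((rp + rm) / 2 - gR x i)), ?_, ?_, ?_, ?_⟩
  · -- norm bound
    rw [norm_sq_gconf]
    have hN : (1 : ℝ) ≤ (n : ℝ) := by exact_mod_cast hn
    have hbound : ∀ k ∈ (Finset.univ : Finset (Fin n)),
        ‖gC (mkG fun i => (gC x i - gC x (rep i), c * ((rp + rm) / 2 - gR x i))) k‖ ^ 2 +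
        gR (mkG fun i => (gC x i - gC x (rep i), c * ((rp + rm) / 2 - gR x i))) k ^ 2 ≤
        (2 * rp * ((n : ℝ) - 1)) ^ 2 + (rm / 2) ^ 2 := by
      intro k _
      rw [gC_mkG, gR_mkG]
      have h1 : ‖gC x k - gC x (rep k)‖ ^ 2 ≤ (2 * rp * ((n : ℝ) - 1)) ^ 2 := by
        have := hdist k
        nlinarith [norm_nonneg (gC x k - gC x (rep k))]
      have h2 : (c * ((rp + rm) / 2 - gR x k)) ^ 2 ≤ (rm / 2) ^ 2 := by
        have ha := (hrad k).1; have hb := (hrad k).2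
        have hub : c * ((rp + rm) / 2 - gR x k) ≤ rm / 2 := by nlinarith
        have hlb : -(rm / 2) ≤ c * ((rp + rm) / 2 - gR x k) := by nlinarith
        nlinarith
      exact add_le_add h1 h2
    calc (∑ k, (‖gC (mkG fun i => (gC x i - gC x (rep i), c * ((rp + rm) / 2 - gR x i))) k‖ ^ 2 +
          gR (mkG fun i => (gC x i - gC x (rep i), c * ((rp + rm) / 2 - gR x i))) k ^ 2))
        ≤ ∑ _k : Fin n, ((2 * rp * ((n : ℝ) - 1)) ^ 2 + (rm / 2) ^ 2) :=
          Finset.sum_le_sum hbound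
      _ = (n : ℝ) * ((2 * rp * ((n : ℝ) - 1)) ^ 2 + (rm / 2) ^ 2) := by
          rw [Finset.sum_const, Finset.card_univ, Fintype.card_fin, nsmul_eq_mul]
      _ < 4 * (n : ℝ) ^ 3 * rp ^ 2 := by
          have h1 : rm ^ 2 < rp ^ 2 := by nlinarith
          have hNpos : (0 : ℝ) < (n : ℝ) := by linarith
          nlinarith [mul_pos hNpos (mul_pos hrp hrp),
            mul_lt_mul_of_pos_left h1 hNpos,
            mul_nonneg (sub_nonneg.mpr hN) (mul_pos hrp hrp).le]
  · -- nplus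
    intro i hi
    rw [inner_nplus, gR_mkG, hi]
    linear_combination hc / 2
  · -- nminus
    intro i hi
    rw [inner_nminus, gR_mkG, hi]
    linear_combination hc / 2
  · -- nij
    intro i j hij hcol
    rw [inner_nij_eq _ _ _ _ hij, gC_mkG, gC_mkG, gR_mkG, gR_mkG]
    have hrij : rep i = rep j := hrepeq i j ⟨hij, hcol⟩
    have hvdiff : (gC x i - gC x (rep i)) - (gC x j - gC x (rep j)) = gC x i - gC x j := by
      rw [hrij]; abel
    rw [hvdiff]
    set s : ℝ := gR x i + gR x j with hs_def
    have hs2 : 2 * rm ≤ s := by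
      have := (hrad i).1; have := (hrad j).1; simp only [hs_def]; linarith
    have hspos : 0 < s := by linarith
    have hinner : ⟪gC x i - gC x j, gC x i - gC x j⟫ = s ^ 2 := by
      rw [real_inner_self_eq_norm_sq, hcol]
    rw [hinner]
    have hkey : (2 * s)⁻¹ * s ^ 2 = s / 2 := by
      field_simp
    rw [hkey]
    have hcs : 0 ≤ c * (s - 2 * rm) := mul_nonneg hc0 (by linarith)
    have hri := (hrad i).1
    have hrj := (hrad j).1
    rw [ge_iff_le]
    nlinarith [hcs, hc]
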